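/- For the homogeneous Firework Process, suppose the sequence n·P(R ≥ n) converges to 1 as n → ∞, and suppose there exists N such that P(R ≥ n) ≤ 1/(n−1) for all n ≥ N. Then P(V) = 0. -/

import Mathlib

open MeasureTheory ProbabilityTheory Filter
open scoped ENNReal

namespace FireworkAux

variable {Ω : Type*} [MeasurableSpace Ω]

/-- The death-window event: all jumps from positions `t, t+1, …, t+n-1` fail to reach `t+n`. -/
def fwE (R : ℕ → Ω → ℝ) (t n : ℕ) : Set Ω :=
  ⋂ j ∈ Finset.range n, {ω | R (t + j) ω < ((n - j : ℕ) : ℝ)}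

lemma fwE_measurable {R : ℕ → Ω → ℝ} (hmeas : ∀ i, Measurable (R i)) (t n : ℕ) :
    MeasurableSet (fwE R t n) :=
  Finset.measurableSet_biInter _ fun j _ =>
    measurableSet_lt (hmeas (t + j)) measurable_const

lemma fwE_measurable_biSup (R : ℕ → Ω → ℝ) {t n : ℕ} (S : Set ℕ)
    (h : ∀ j, j < n → t + j ∈ S) :
    MeasurableSet[⨆ i ∈ S, MeasurableSpace.comap (R i) inferInstance] (fwE R t n) := by
  apply Finset.measurableSet_biInter
  intro j hj
  have hle : MeasurableSpace.comap (R (t + j)) inferInstance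
      ≤ ⨆ i ∈ S, MeasurableSpace.comap (R i) inferInstance :=
    le_iSup₂ (f := fun (i : ℕ) (_ : i ∈ S) => MeasurableSpace.comap (R i) inferInstance)
      (t + j) (h j (Finset.mem_range.mp hj))
  exact hle _ ⟨Set.Iio ((n - j : ℕ) : ℝ), measurableSet_Iio, rfl⟩

lemma fwE_prob (P : Measure Ω) {R : ℕ → Ω → ℝ} {R₀ : Ω → ℝ}
    (hindep : iIndepFun R P)
    (hid : ∀ i, IdentDistrib (R i) R₀ P P) (t n : ℕ) :
    P (fwE R t n) = ∏ j ∈ Finset.range n, P {ω | R₀ ω < ((n - j : ℕ) : ℝ)} := by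
  classical
  have h1 : fwE R t n =
      ⋂ i ∈ (Finset.range n).image (t + ·), R i ⁻¹' Set.Iio ((n - (i - t) : ℕ) : ℝ) := by
    ext ω
    simp only [fwE, Set.mem_iInter, Finset.mem_range, Finset.mem_image, Set.mem_setOf_eq, Set.mem_preimage, Set.mem_Iio]
    constructor
    · rintro h i ⟨j, hj, rfl⟩
      simpa [Nat.add_sub_cancel_left] using h j hj
    · intro h j hj
      simpa [Nat.add_sub_cancel_left] using h (t + j) ⟨j, hj, rfl⟩
  rw [h1, hindep.meas_biInter (fun i _ => ⟨Set.Iio ((n - (i - t) : ℕ) : ℝ),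
    measurableSet_Iio, rfl⟩)]
  rw [Finset.prod_image (by intro a _ b _ hab; simp only at hab; omega)]
  refine Finset.prod_congr rfl fun j hj => ?_
  have hpre₀ : {ω | R₀ ω < ((n - j : ℕ) : ℝ)}
      = R₀ ⁻¹' Set.Iio ((n - j : ℕ) : ℝ) := rfl
  rw [Nat.add_sub_cancel_left, hpre₀, (hid (t + j)).measure_mem_eq measurableSet_Iio]

end FireworkAux

namespace FireworkAux
variable {Ω : Type*} [MeasurableSpace Ω]

/-- First-death event at time `t`. -/
def fwF (R : ℕ → Ω → ℝ) (t : ℕ) : Set Ω :=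
  fwE R 0 t \ ⋃ s ∈ Finset.Ico 1 t, fwE R 0 s

lemma fwF_measurable {R : ℕ → Ω → ℝ} (hmeas : ∀ i, Measurable (R i)) (t : ℕ) :
    MeasurableSet (fwF R t) :=
  (fwE_measurable hmeas 0 t).diff
    (Finset.measurableSet_biUnion _ fun s _ => fwE_measurable hmeas 0 s)

lemma fwF_subset (R : ℕ → Ω → ℝ) (t : ℕ) : fwF R t ⊆ fwE R 0 t :=
  Set.diff_subset

lemma fwF_disjoint (R : ℕ → Ω → ℝ) {s t : ℕ} (hs : 1 ≤ s) (hst : s < t) :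
    Disjoint (fwF R s) (fwF R t) := by
  refine Set.disjoint_left.mpr fun ω hωs hωt => ?_
  exact hωt.2 (Set.mem_biUnion (Finset.mem_Ico.mpr ⟨hs, hst⟩) (fwF_subset R s hωs))

lemma fwF_cover (R : ℕ → Ω → ℝ) {n : ℕ} (hn : 1 ≤ n) {ω : Ω} (hω : ω ∈ fwE R 0 n) :
    ∃ t, 1 ≤ t ∧ t ≤ n ∧ ω ∈ fwF R t := by
  classical
  have hne : ((Finset.Icc 1 n).filter fun s => ω ∈ fwE R 0 s).Nonempty :=
    ⟨n, Finset.mem_filter.mpr ⟨Finset.mem_Icc.mpr ⟨hn, le_rfl⟩, hω⟩⟩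
  set t := (((Finset.Icc 1 n).filter fun s => ω ∈ fwE R 0 s)).min' hne with ht
  have htmem := Finset.min'_mem _ hne
  rw [Finset.mem_filter, Finset.mem_Icc] at htmem
  refine ⟨t, htmem.1.1, htmem.1.2, htmem.2, ?_⟩
  intro hmem
  rw [Set.mem_iUnion₂] at hmem
  obtain ⟨s, hs, hωs⟩ := hmem
  rw [Finset.mem_Ico] at hs
  have hsmem : s ∈ (Finset.Icc 1 n).filter fun s => ω ∈ fwE R 0 s :=
    Finset.mem_filter.mpr ⟨Finset.mem_Icc.mpr ⟨hs.1, le_trans (le_of_lt hs.2) htmem.1.2⟩, hωs⟩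
  exact absurd (Finset.min'_le _ s hsmem) (not_le.mpr hs.2)

lemma fwE_split (R : ℕ → Ω → ℝ) {t n : ℕ} (htn : t ≤ n) :
    fwE R 0 t ∩ fwE R 0 n = fwE R 0 t ∩ fwE R t (n - t) := by
  ext ω
  simp only [fwE, Set.mem_inter_iff, Set.mem_iInter, Finset.mem_range, Set.mem_setOf_eq,
    Nat.zero_add]
  constructor
  · rintro ⟨h1, h2⟩
    refine ⟨h1, fun j hj => ?_⟩
    have := h2 (t + j) (by omega)
    have heq : n - (t + j) = n - t - j := by omega
    rwa [heq] at this
  · rintro ⟨h1, h2⟩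
    refine ⟨h1, fun i hi => ?_⟩
    by_cases hit : i < t
    · have h := h1 i hit
      have : ((t - i : ℕ) : ℝ) ≤ ((n - i : ℕ) : ℝ) := by
        exact_mod_cast Nat.sub_le_sub_right htn i
      linarith
    · have hj : i - t < n - t := by omega
      have h := h2 (i - t) hj
      have h1eq : t + (i - t) = i := by omega
      have h2eq : n - t - (i - t) = n - i := by omega
      rwa [h1eq, h2eq] at h

lemma fwF_split (R : ℕ → Ω → ℝ) {t n : ℕ} (htn : t ≤ n) :
    fwF R t ∩ fwE R 0 n = fwF R t ∩ fwE R t (n - t) := by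
  have h := Set.ext_iff.mp (fwE_split R htn)
  ext ω
  have hh := h ω
  simp only [Set.mem_inter_iff] at hh ⊢
  simp only [fwF, Set.mem_diff]
  tauto

lemma fwF_indep_prob (P : Measure Ω) {R : ℕ → Ω → ℝ}
    (hindep : iIndepFun R P)
    (hmeas : ∀ i, Measurable (R i)) (t k : ℕ) :
    P (fwF R t ∩ fwE R t k) = P (fwF R t) * P (fwE R t k) := by
  have hdisj : Disjoint {i : ℕ | i < t} {i : ℕ | t ≤ i} :=
    Set.disjoint_left.mpr fun i hi hi' => by
      simp only [Set.mem_setOf_eq] at hi hi'; omega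
  have hIndep := indep_iSup_of_disjoint (fun i => (hmeas i).comap_le) hindep.iIndep hdisj
  have h1 : MeasurableSet[⨆ i ∈ {i : ℕ | i < t}, MeasurableSpace.comap (R i) inferInstance]
      (fwF R t) := by
    apply MeasurableSet.diff
    · exact fwE_measurable_biSup R _ fun j hj => by simpa using hj
    · exact Finset.measurableSet_biUnion _ fun s hs =>
        fwE_measurable_biSup R _ fun j hj => by
          have := Finset.mem_Ico.mp hs; simp only [Set.mem_setOf_eq]; omega
  have h2 : MeasurableSet[⨆ i ∈ {i : ℕ | t ≤ i}, MeasurableSpace.comap (R i) inferInstance]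
      (fwE R t k) :=
    fwE_measurable_biSup R _ fun j _ => by simp only [Set.mem_setOf_eq]; omega
  exact (Indep_iff _ _ _).mp hIndep _ _ h1 h2

end FireworkAux
open FireworkAux in
/-- **Homogeneous Firework Process.** If `n·P(R ≥ n) → 1` and eventually
`P(R ≥ n) ≤ 1/(n-1)`, then `P(V) = 0`. -/
theorem firework_homogeneous_death_of_limit_eq_one
    {Ω : Type*} [MeasurableSpace Ω] (P : Measure Ω) [IsProbabilityMeasure P]
    (R : ℕ → Ω → ℝ) (R₀ : Ω → ℝ)
    (hmeas : ∀ i, Measurable (R i)) (hmeas₀ : Measurable R₀)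
    (hnonneg : ∀ i ω, 0 ≤ R i ω)
    (hindep : iIndepFun R P)
    (hid : ∀ i, IdentDistrib (R i) R₀ P P)
    (h0 : 0 < P {ω | R₀ ω < 1}) (h1 : P {ω | R₀ ω < 1} < 1)
    (V : Set Ω)
    (hV : V = ⋂ (n : ℕ) (_ : 1 ≤ n), ⋃ i ∈ Finset.range n,
      {ω | ((n - i : ℕ) : ℝ) ≤ R i ω})
    (hL : Tendsto (fun n : ℕ => (n : ℝ) * (P {ω | (n : ℝ) ≤ R₀ ω}).toReal)
      atTop (nhds 1))
    (hN : ∃ N : ℕ, ∀ n ≥ N, (P {ω | (n : ℝ) ≤ R₀ ω}).toReal ≤ 1 / ((n : ℝ) - 1)) :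
    P V = 0 := by
  classical
  obtain ⟨N₀, hN₀⟩ := hN
  -- the sequence q n = ∏_{k=1}^n P(R₀ < k)
  set q : ℕ → ℝ≥0∞ := fun n => ∏ j ∈ Finset.range n, P {ω | R₀ ω < ((j + 1 : ℕ) : ℝ)}
    with hqdef
  have hprob : ∀ t n, P (fwE R t n) = q n := by
    intro t n
    rw [fwE_prob P hindep hid t n]
    simp only [hqdef]
    rw [← Finset.prod_range_reflect (fun j => P {ω | R₀ ω < ((j + 1 : ℕ) : ℝ)}) n]
    refine Finset.prod_congr rfl fun j hj => ?_
    have hj' : n - j = (n - 1 - j) + 1 := by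
      have := Finset.mem_range.mp hj; omega
    rw [hj']
  have hq0 : q 0 = 1 := by simp [hqdef]
  have hqle1 : ∀ n, q n ≤ 1 := by
    intro n
    calc q n ≤ ∏ _j ∈ Finset.range n, 1 :=
          Finset.prod_le_prod' fun i _ => prob_le_one
      _ = 1 := by simp
  have hqfin : ∀ n, q n ≠ ∞ := fun n => (lt_of_le_of_lt (hqle1 n) ENNReal.one_lt_top).ne
  -- main renewal identity
  have hmain : ∀ n, 1 ≤ n → q n = ∑ t ∈ Finset.Icc 1 n, P (fwF R t) * q (n - t) := by
    intro n hn
    have hEcover : fwE R 0 n = ⋃ t ∈ Finset.Icc 1 n, (fwF R t ∩ fwE R 0 n) := by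
      apply Set.Subset.antisymm
      · intro ω hω
        obtain ⟨t, ht1, htn, hωt⟩ := fwF_cover R hn hω
        exact Set.mem_biUnion (Finset.mem_Icc.mpr ⟨ht1, htn⟩) ⟨hωt, hω⟩
      · exact Set.iUnion₂_subset fun t _ => Set.inter_subset_right
    have hdisj : (↑(Finset.Icc 1 n) : Set ℕ).PairwiseDisjoint
        fun t => fwF R t ∩ fwE R 0 n := by
      intro a ha b hb hab
      simp only [Finset.coe_Icc, Set.mem_Icc] at ha hb
      have hFab : Disjoint (fwF R a) (fwF R b) := by
        rcases lt_or_gt_of_ne hab with h | h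
        · exact fwF_disjoint R ha.1 h
        · exact (fwF_disjoint R hb.1 h).symm
      exact (hFab.mono Set.inter_subset_left Set.inter_subset_left)
    calc q n = P (fwE R 0 n) := (hprob 0 n).symm
      _ = P (⋃ t ∈ Finset.Icc 1 n, (fwF R t ∩ fwE R 0 n)) := by rw [← hEcover]
      _ = ∑ t ∈ Finset.Icc 1 n, P (fwF R t ∩ fwE R 0 n) :=
          measure_biUnion_finset hdisj fun t _ =>
            (fwF_measurable hmeas t).inter (fwE_measurable hmeas 0 n)
      _ = ∑ t ∈ Finset.Icc 1 n, P (fwF R t) * q (n - t) := by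
          refine Finset.sum_congr rfl fun t ht => ?_
          rw [fwF_split R (Finset.mem_Icc.mp ht).2, fwF_indep_prob P hindep hmeas,
            hprob]
  -- partial sums
  set QQ : ℕ → ℝ≥0∞ := fun N => ∑ n ∈ Finset.Icc 1 N, q n with hQQdef
  have hQfin : ∀ N, QQ N ≠ ∞ := by
    intro N
    have h : QQ N ≤ ((Finset.Icc 1 N).card : ℝ≥0∞) := by
      rw [hQQdef]
      calc ∑ n ∈ Finset.Icc 1 N, q n ≤ ∑ _n ∈ Finset.Icc 1 N, 1 :=
            Finset.sum_le_sum fun n _ => hqle1 n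
        _ = _ := by simp
    exact (lt_of_le_of_lt h (ENNReal.natCast_lt_top _)).ne
  have hsum : ∀ N, QQ N ≤ (∑ t ∈ Finset.Icc 1 N, P (fwF R t)) * (1 + QQ N) := by
    intro N
    have h1 : QQ N = ∑ n ∈ Finset.Ico 1 (N + 1), ∑ t ∈ Finset.Ico 1 (n + 1),
        P (fwF R t) * q (n - t) := by
      simp only [hQQdef]
      rw [← Finset.Ico_add_one_right_eq_Icc]
      refine Finset.sum_congr rfl fun n hn => ?_
      rw [Finset.mem_Ico] at hn
      rw [hmain n hn.1, ← Finset.Ico_add_one_right_eq_Icc]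
    conv_lhs => rw [h1, ← Finset.sum_Ico_Ico_comm 1 (N + 1)
      (fun t n => P (fwF R t) * q (n - t))]
    have h2 : ∀ t, ∑ n ∈ Finset.Ico t (N + 1), q (n - t) ≤ 1 + QQ N := by
      intro t
      rw [Finset.sum_Ico_eq_sum_range]
      calc ∑ k ∈ Finset.range (N + 1 - t), q (t + k - t)
          = ∑ k ∈ Finset.range (N + 1 - t), q k := by
            refine Finset.sum_congr rfl fun k _ => by rw [Nat.add_sub_cancel_left]
        _ ≤ ∑ k ∈ Finset.range (N + 1), q k :=
            Finset.sum_le_sum_of_subset (Finset.range_subset_range.mpr (by omega))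
        _ = 1 + QQ N := by
            rw [Finset.range_eq_Ico, Finset.sum_eq_sum_Ico_succ_bot (by omega), hq0,
              Finset.Ico_add_one_right_eq_Icc]
    calc ∑ t ∈ Finset.Ico 1 (N + 1), ∑ n ∈ Finset.Ico t (N + 1), P (fwF R t) * q (n - t)
        = ∑ t ∈ Finset.Ico 1 (N + 1), P (fwF R t) * ∑ n ∈ Finset.Ico t (N + 1), q (n - t) := by
          refine Finset.sum_congr rfl fun t _ => (Finset.mul_sum _ _ _).symm
      _ ≤ ∑ t ∈ Finset.Ico 1 (N + 1), P (fwF R t) * (1 + QQ N) :=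
          Finset.sum_le_sum fun t _ => mul_le_mul_right (h2 t) _
      _ = (∑ t ∈ Finset.Ico 1 (N + 1), P (fwF R t)) * (1 + QQ N) :=
          (Finset.sum_mul _ _ _).symm
      _ = (∑ t ∈ Finset.Icc 1 N, P (fwF R t)) * (1 + QQ N) := by
          rw [Finset.Ico_add_one_right_eq_Icc]
  -- V is disjoint from every fwF R t, t ≥ 1
  have hVmeas : MeasurableSet V := by
    rw [hV]
    exact MeasurableSet.iInter fun n => MeasurableSet.iInter fun _ =>
      Finset.measurableSet_biUnion _ fun i _ =>
        measurableSet_le measurable_const (hmeas i)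
  have hVF : ∀ t, 1 ≤ t → Disjoint V (fwF R t) := by
    intro t ht
    refine Set.disjoint_left.mpr fun ω hωV hωF => ?_
    have hωE := fwF_subset R t hωF
    rw [hV] at hωV
    have h2 := Set.mem_iInter.mp (Set.mem_iInter.mp hωV t) ht
    obtain ⟨i, hi, hle⟩ := Set.mem_iUnion₂.mp h2
    simp only [fwE, Set.mem_iInter, Set.mem_setOf_eq, Nat.zero_add] at hωE
    have hlt := hωE i hi
    simp only [Set.mem_setOf_eq] at hle
    linarith
  have hFV : ∀ N, (∑ t ∈ Finset.Icc 1 N, P (fwF R t)) + P V ≤ 1 := by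
    intro N
    have hdisjF : (↑(Finset.Icc 1 N) : Set ℕ).PairwiseDisjoint (fwF R) := by
      intro a ha b hb hab
      simp only [Finset.coe_Icc, Set.mem_Icc] at ha hb
      rcases lt_or_gt_of_ne hab with h | h
      · exact fwF_disjoint R ha.1 h
      · exact (fwF_disjoint R hb.1 h).symm
    rw [← measure_biUnion_finset hdisjF fun t _ => fwF_measurable hmeas t]
    have hUV : Disjoint (⋃ t ∈ Finset.Icc 1 N, fwF R t) V := by
      refine Set.disjoint_left.mpr fun ω hω hωV => ?_
      obtain ⟨t, htmem, hωt⟩ := Set.mem_iUnion₂.mp hω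
      exact Set.disjoint_left.mp (hVF t (Finset.mem_Icc.mp htmem).1) hωV hωt
    rw [← measure_union hUV hVmeas]
    exact prob_le_one
  -- the key real inequality
  have key : ∀ N, (P V).toReal * (1 + (QQ N).toReal) ≤ 1 := by
    intro N
    set S : ℝ≥0∞ := ∑ t ∈ Finset.Icc 1 N, P (fwF R t) with hSdef
    have hSfin : S ≠ ∞ := by
      have : S ≤ 1 := le_trans (le_add_right le_rfl) (hFV N)
      exact (lt_of_le_of_lt this ENNReal.one_lt_top).ne
    have h2 : (QQ N).toReal ≤ S.toReal * (1 + (QQ N).toReal) := by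
      have hr := ENNReal.toReal_mono
        (ENNReal.mul_ne_top hSfin (ENNReal.add_ne_top.mpr ⟨ENNReal.one_ne_top, hQfin N⟩))
        (hsum N)
      rwa [ENNReal.toReal_mul, ENNReal.toReal_add ENNReal.one_ne_top (hQfin N),
        ENNReal.toReal_one] at hr
    have h3 : S.toReal + (P V).toReal ≤ 1 := by
      have := ENNReal.toReal_mono ENNReal.one_ne_top (hFV N)
      rwa [ENNReal.toReal_add hSfin (measure_ne_top P V), ENNReal.toReal_one] at this
    have hv : (0:ℝ) ≤ (P V).toReal := ENNReal.toReal_nonneg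
    have hQ : (0:ℝ) ≤ (QQ N).toReal := ENNReal.toReal_nonneg
    have hs : (0:ℝ) ≤ S.toReal := ENNReal.toReal_nonneg
    nlinarith [mul_nonneg (by linarith : (0:ℝ) ≤ 1 - S.toReal - (P V).toReal)
      (by linarith : (0:ℝ) ≤ 1 + (QQ N).toReal)]
  -- real tail probabilities
  set r : ℕ → ℝ := fun k => (P {ω | (k : ℝ) ≤ R₀ ω}).toReal with hrdef
  have hcompl : ∀ k : ℕ, (P {ω | R₀ ω < (k : ℝ)}).toReal = 1 - r k := by
    intro k
    have hset : {ω | R₀ ω < (k : ℝ)} = {ω | (k : ℝ) ≤ R₀ ω}ᶜ := by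
      ext ω; simp [not_le]
    rw [hset, prob_compl_eq_one_sub (measurableSet_le measurable_const hmeas₀),
      ENNReal.toReal_sub_of_le prob_le_one ENNReal.one_ne_top, ENNReal.toReal_one]
  have hqtoReal : ∀ n, (q n).toReal = ∏ j ∈ Finset.range n, (1 - r (j + 1)) := by
    intro n
    simp only [hqdef]
    rw [ENNReal.toReal_prod]
    exact Finset.prod_congr rfl fun j _ => hcompl (j + 1)
  have hr_nonneg : ∀ k : ℕ, 0 ≤ r k := fun k => ENNReal.toReal_nonneg
  have hr_le : ∀ k : ℕ, 1 ≤ k → r k ≤ r 1 := by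
    intro k hk
    simp only [hrdef]
    apply ENNReal.toReal_mono (measure_ne_top P _)
    apply measure_mono
    intro ω hω
    simp only [Set.mem_setOf_eq] at hω ⊢
    have h1k : (1 : ℝ) ≤ (k : ℝ) := by exact_mod_cast hk
    push_cast
    linarith
  have hr1 : r 1 < 1 := by
    have hset : {ω | ((1 : ℕ) : ℝ) ≤ R₀ ω} = {ω | R₀ ω < 1}ᶜ := by
      ext ω; simp [not_lt]
    have hlt : (1 : ℝ≥0∞) - P {ω | R₀ ω < 1} < 1 :=
      ENNReal.sub_lt_self ENNReal.one_ne_top one_ne_zero h0.ne'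
    have hfin : (1 : ℝ≥0∞) - P {ω | R₀ ω < 1} ≠ ∞ :=
      (lt_of_le_of_lt tsub_le_self ENNReal.one_lt_top).ne
    have : r 1 = ((1 : ℝ≥0∞) - P {ω | R₀ ω < 1}).toReal := by
      simp only [hrdef]
      rw [show ((1:ℕ) : ℝ) = (1 : ℝ) from by norm_num] at hset ⊢
      rw [hset, prob_compl_eq_one_sub (measurableSet_lt hmeas₀ measurable_const)]
    rw [this]
    calc ((1 : ℝ≥0∞) - P {ω | R₀ ω < 1}).toReal
        < (1 : ℝ≥0∞).toReal := by
          exact (ENNReal.toReal_lt_toReal hfin ENNReal.one_ne_top).mpr hlt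
      _ = 1 := ENNReal.toReal_one
  have hfac_pos : ∀ k : ℕ, 1 ≤ k → 0 < 1 - r k := by
    intro k hk
    have := hr_le k hk
    linarith
  have hq_pos : ∀ n, 0 < (q n).toReal := by
    intro n
    rw [hqtoReal]
    exact Finset.prod_pos fun j _ => hfac_pos (j + 1) (by omega)
  set K : ℕ := max N₀ 3 with hKdef
  have hK3 : (3 : ℝ) ≤ (K : ℝ) := by exact_mod_cast le_max_right N₀ 3
  have hKfac : ∀ k : ℕ, K ≤ k → ((k : ℝ) - 2) / ((k : ℝ) - 1) ≤ 1 - r k := by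
    intro k hk
    have hk3 : 3 ≤ k := le_trans (le_max_right _ _) hk
    have hkr : (3 : ℝ) ≤ (k : ℝ) := by exact_mod_cast hk3
    have h' : r k ≤ 1 / ((k : ℝ) - 1) := hN₀ k (le_trans (le_max_left _ _) hk)
    have hden : (0 : ℝ) < (k : ℝ) - 1 := by linarith
    have heq : (1 : ℝ) - 1 / ((k : ℝ) - 1) = ((k : ℝ) - 2) / ((k : ℝ) - 1) := by
      field_simp
      ring
    linarith
  have hstep : ∀ m : ℕ,
      (q K).toReal * ((K : ℝ) - 1) / ((K : ℝ) + (m : ℝ) - 1) ≤ (q (K + m)).toReal := by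
    intro m
    induction m with
    | zero =>
      simp only [Nat.cast_zero, add_zero, Nat.add_zero]
      rw [mul_div_assoc, div_self (by linarith), mul_one]
    | succ m ih =>
      have hm0 : (0 : ℝ) ≤ (m : ℝ) := Nat.cast_nonneg m
      have hfac : ((K : ℝ) + m - 1) / ((K : ℝ) + m) ≤ 1 - r (K + m + 1) := by
        have h := hKfac (K + m + 1) (by omega)
        have hcast : ((K + m + 1 : ℕ) : ℝ) = (K : ℝ) + m + 1 := by push_cast; ring
        rw [hcast] at h
        have heq2 : ((K : ℝ) + m + 1 - 2) / ((K : ℝ) + m + 1 - 1)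
            = ((K : ℝ) + m - 1) / ((K : ℝ) + m) := by ring_nf
        rw [heq2] at h
        exact h
      have hq_succ : (q (K + m + 1)).toReal = (q (K + m)).toReal * (1 - r (K + m + 1)) := by
        rw [hqtoReal, hqtoReal, Finset.prod_range_succ]
      have hd1 : (0 : ℝ) < (K : ℝ) + m - 1 := by linarith
      have hd2 : (0 : ℝ) < (K : ℝ) + m := by linarith
      have hgoal_eq : (K : ℝ) + ((m + 1 : ℕ) : ℝ) - 1 = (K : ℝ) + m := by push_cast; ring
      rw [hgoal_eq, show K + (m + 1) = K + m + 1 from rfl, hq_succ]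
      have hkey : (q K).toReal * ((K : ℝ) - 1) / ((K : ℝ) + m) =
          ((q K).toReal * ((K : ℝ) - 1) / ((K : ℝ) + m - 1))
            * (((K : ℝ) + m - 1) / ((K : ℝ) + m)) := by
        field_simp
      rw [hkey]
      exact mul_le_mul ih hfac (div_nonneg hd1.le hd2.le) ENNReal.toReal_nonneg
  set a : ℝ := (q K).toReal * ((K : ℝ) - 1) with hadef
  have ha_pos : 0 < a := mul_pos (hq_pos K) (by linarith)
  have hlow : ∀ n : ℕ, K ≤ n → a / (n : ℝ) ≤ (q n).toReal := by
    intro n hn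
    have h := hstep (n - K)
    have hNcast : ((n - K : ℕ) : ℝ) = (n : ℝ) - (K : ℝ) := by
      rw [Nat.cast_sub hn]
    rw [hNcast, show K + (n - K) = n from by omega] at h
    have heq3 : (K : ℝ) + ((n : ℝ) - (K : ℝ)) - 1 = (n : ℝ) - 1 := by ring
    rw [heq3] at h
    refine le_trans ?_ h
    have hn3 : (3 : ℝ) ≤ (n : ℝ) := by
      have : 3 ≤ n := by omega
      exact_mod_cast this
    gcongr
    · linarith
    · linarith
  have hH : Tendsto (fun M : ℕ => ∑ n ∈ Finset.Ico 1 M, (1 : ℝ) / n) atTop atTop := by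
    have h := Real.tendsto_sum_range_one_div_nat_succ_atTop
    have heq : ∀ M : ℕ, ∑ n ∈ Finset.Ico 1 M, (1 : ℝ) / n
        = ∑ i ∈ Finset.range (M - 1), 1 / ((i : ℝ) + 1) := by
      intro M
      rw [Finset.sum_Ico_eq_sum_range]
      refine Finset.sum_congr rfl fun i _ => ?_
      push_cast
      ring
    exact Tendsto.congr (fun M => (heq M).symm) (h.comp (tendsto_sub_atTop_nat 1))
  have hQlow : ∀ N, K ≤ N →
      a * ((∑ n ∈ Finset.Ico 1 (N + 1), (1 : ℝ) / n) - ∑ n ∈ Finset.Ico 1 K, (1 : ℝ) / n)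
        ≤ (QQ N).toReal := by
    intro N hNK
    have hK1 : 1 ≤ K := by omega
    have hsplit2 : (∑ n ∈ Finset.Ico 1 K, (1 : ℝ) / n)
        + ∑ n ∈ Finset.Ico K (N + 1), (1 : ℝ) / n
        = ∑ n ∈ Finset.Ico 1 (N + 1), (1 : ℝ) / n :=
      Finset.sum_Ico_consecutive _ hK1 (by omega)
    have hQr : (QQ N).toReal = ∑ n ∈ Finset.Icc 1 N, (q n).toReal := by
      simp only [hQQdef]
      exact ENNReal.toReal_sum fun n _ => hqfin n
    have hstep1 :
        a * ((∑ n ∈ Finset.Ico 1 (N + 1), (1 : ℝ) / n) - ∑ n ∈ Finset.Ico 1 K, (1 : ℝ) / n)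
          = ∑ n ∈ Finset.Ico K (N + 1), a / (n : ℝ) := by
      have h2 : (∑ n ∈ Finset.Ico 1 (N + 1), (1 : ℝ) / n)
          - ∑ n ∈ Finset.Ico 1 K, (1 : ℝ) / n
          = ∑ n ∈ Finset.Ico K (N + 1), (1 : ℝ) / n := by linarith
      rw [h2, Finset.mul_sum]
      exact Finset.sum_congr rfl fun n _ => by rw [mul_one_div]
    rw [hstep1, hQr]
    calc ∑ n ∈ Finset.Ico K (N + 1), a / (n : ℝ)
        ≤ ∑ n ∈ Finset.Ico K (N + 1), (q n).toReal :=
          Finset.sum_le_sum fun n hn => hlow n (Finset.mem_Ico.mp hn).1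
      _ ≤ ∑ n ∈ Finset.Icc 1 N, (q n).toReal := by
          refine Finset.sum_le_sum_of_subset_of_nonneg ?_ fun n _ _ => ENNReal.toReal_nonneg
          intro x hx
          rw [Finset.mem_Ico] at hx
          rw [Finset.mem_Icc]
          omega
  have hvle : ∀ ε : ℝ, 0 < ε → (P V).toReal ≤ ε := by
    intro ε hε
    obtain ⟨M, hM1, hM2⟩ := ((hH.eventually_ge_atTop
      (1 / (ε * a) + ∑ n ∈ Finset.Ico 1 K, (1 : ℝ) / n)).and
      (eventually_ge_atTop (K + 1))).exists
    set N := M - 1 with hNdef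
    have hMN : M = N + 1 := by omega
    have hNK : K ≤ N := by omega
    have hQN : 1 / ε ≤ (QQ N).toReal := by
      have h := hQlow N hNK
      rw [← hMN] at h
      have h2 : 1 / (ε * a)
          ≤ (∑ n ∈ Finset.Ico 1 M, (1 : ℝ) / n) - ∑ n ∈ Finset.Ico 1 K, (1 : ℝ) / n := by
        linarith
      have h3 : 1 / ε = a * (1 / (ε * a)) := by
        field_simp
      calc 1 / ε = a * (1 / (ε * a)) := h3
        _ ≤ a * ((∑ n ∈ Finset.Ico 1 M, (1 : ℝ) / n)
            - ∑ n ∈ Finset.Ico 1 K, (1 : ℝ) / n) :=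
          mul_le_mul_of_nonneg_left h2 ha_pos.le
        _ ≤ (QQ N).toReal := h
    have hk := key N
    rw [mul_add, mul_one] at hk
    have hQnn : 0 ≤ (QQ N).toReal := ENNReal.toReal_nonneg
    have hvnn : 0 ≤ (P V).toReal := ENNReal.toReal_nonneg
    by_contra hcon
    push_neg at hcon
    have hεQ : 1 ≤ ε * (QQ N).toReal := by
      calc (1 : ℝ) = ε * (1 / ε) := by field_simp
        _ ≤ ε * (QQ N).toReal := mul_le_mul_of_nonneg_left hQN hε.le
    have h5 : ε * (QQ N).toReal ≤ (P V).toReal * (QQ N).toReal :=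
      mul_le_mul_of_nonneg_right hcon.le hQnn
    linarith
  have hv0 : (P V).toReal = 0 := by
    by_contra hne
    have hpos : 0 < (P V).toReal := lt_of_le_of_ne ENNReal.toReal_nonneg (Ne.symm hne)
    have := hvle ((P V).toReal / 2) (by linarith)
    linarith
  exact ((ENNReal.toReal_eq_zero_iff _).mp hv0).resolve_right (measure_ne_top P V)
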